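/- Let n be a standard complex Gaussian and let a = μ̄_y q_y − μ̄_x q_x ≠ 0 with |q_x| = |q_y|. Define X = μ_x + q_x n and Y = μ_y + q_y n. Then Pr(|X|² > |Y|²) = (1/2)[1 + erf((|μ_x|² − |μ_y|²)/(2|a|))] and in particular Pr(|X|² > |Y|²) = 1/2 when |μ_x| = |μ_y|. -/

import Mathlib

open MeasureTheory ProbabilityTheory

/-- The Gauss error function `erf t = (2/√π) ∫₀ᵗ e^{−s²} ds`. -/
noncomputable def erf (t : ℝ) : ℝ :=
  (2 / Real.sqrt Real.pi) * ∫ s in (0 : ℝ)..t, Real.exp (-(s ^ 2))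

section Aux

open Set Real

lemma gaussPDF_half (x : ℝ) :
    gaussianPDFReal 0 (1/2) x = (Real.sqrt Real.pi)⁻¹ * Real.exp (-x^2) := by
  unfold gaussianPDFReal
  norm_num
  have h2 : Real.sqrt 2 ≠ 0 := by positivity
  field_simp

lemma integrable_gauss : Integrable (fun x : ℝ => Real.exp (-x^2)) := by
  have := integrable_exp_neg_mul_sq (b := (1:ℝ)) one_pos
  simpa using this

lemma gauss_Iic_zero : ∫ x in Iic (0:ℝ), Real.exp (-x^2) = Real.sqrt Real.pi / 2 := by
  have h1 : (∫ x in Iic (0:ℝ), Real.exp (-(-x)^2)) = ∫ x in Ioi (-(0:ℝ)), Real.exp (-x^2) :=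
    integral_comp_neg_Iic 0 (fun x => Real.exp (-x^2))
  have h2 : ∫ x in Ioi (0:ℝ), Real.exp (-(1:ℝ)*x^2) = Real.sqrt (Real.pi / 1) / 2 :=
    integral_gaussian_Ioi 1
  simp only [neg_sq, neg_zero] at h1
  simp only [neg_mul, one_mul, div_one] at h2
  rw [h1, h2]

lemma gauss_cdf (t : ℝ) :
    ∫ x in Iio t, gaussianPDFReal 0 (1/2) x = (1/2) * (1 + erf t) := by
  have hsqrt : (0:ℝ) < Real.sqrt Real.pi := Real.sqrt_pos.mpr Real.pi_pos
  have hIic : ∫ x in Iic t, Real.exp (-x^2)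
      = Real.sqrt Real.pi / 2 + ∫ s in (0:ℝ)..t, Real.exp (-s^2) := by
    have h := intervalIntegral.integral_Iic_sub_Iic (integrable_gauss.integrableOn (s := Iic (0:ℝ)))
      (integrable_gauss.integrableOn (s := Iic t))
    rw [gauss_Iic_zero] at h
    linarith
  have hIio : ∫ x in Iio t, gaussianPDFReal 0 (1/2) x
      = ∫ x in Iic t, gaussianPDFReal 0 (1/2) x :=
    setIntegral_congr_set Iio_ae_eq_Iic
  rw [hIio]
  simp only [gaussPDF_half]
  rw [integral_const_mul, hIic, erf]
  have : ∀ s : ℝ, -(s^2) = -s^2 := fun s => rfl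
  field_simp

/-- The two-dimensional standard product Gaussian as a density w.r.t. Lebesgue. -/
lemma prod_gauss_density :
    (gaussianReal 0 (1/2)).prod (gaussianReal 0 (1/2))
      = (volume.prod volume).withDensity
          (fun p : ℝ × ℝ => gaussianPDF 0 (1/2) p.1 * gaussianPDF 0 (1/2) p.2) := by
  have hv : (1/2 : NNReal) ≠ 0 := by norm_num
  refine Measure.prod_eq (fun s t hs ht => ?_)
  rw [withDensity_apply _ (hs.prod ht), ← Measure.prod_restrict,
    lintegral_prod_mul (measurable_gaussianPDF 0 (1/2)).aemeasurable
      (measurable_gaussianPDF 0 (1/2)).aemeasurable,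
    gaussianReal_apply _ hv s, gaussianReal_apply _ hv t]

lemma rot_invariant_density {u : ℂ} (hu : ‖u‖ = 1) (z : ℂ) :
    gaussianPDF 0 (1/2) (u*z).re * gaussianPDF 0 (1/2) (u*z).im
      = gaussianPDF 0 (1/2) z.re * gaussianPDF 0 (1/2) z.im := by
  have key : ∀ w : ℂ, gaussianPDF 0 (1/2) w.re * gaussianPDF 0 (1/2) w.im
      = ENNReal.ofReal ((Real.sqrt Real.pi)⁻¹ * (Real.sqrt Real.pi)⁻¹
        * Real.exp (-(Complex.normSq w))) := by
    intro w
    simp only [gaussianPDF, gaussPDF_half]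
    rw [← ENNReal.ofReal_mul (by positivity)]
    congr 1
    rw [Complex.normSq_apply,
      show -(w.re*w.re + w.im*w.im) = -w.re^2 + -w.im^2 by ring, Real.exp_add]
    ring
  rw [key, key]
  congr 3
  rw [Complex.normSq_mul]
  have : Complex.normSq u = 1 := by
    rw [← Complex.sq_norm, hu]; norm_num
  rw [this, one_mul]

/-- Probability of a half-plane under the 2-D standard Gaussian. -/
lemma halfplane_measure (b : ℂ) (hb : b ≠ 0) (c : ℝ) :
    ((gaussianReal 0 (1/2)).prod (gaussianReal 0 (1/2)))
        {p : ℝ × ℝ | b.re * p.1 - b.im * p.2 < c}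
      = gaussianReal 0 (1/2) (Iio (c / ‖b‖)) := by
  set ν := gaussianReal 0 (1/2) with hν
  set F : ℝ × ℝ → ENNReal :=
    fun p => gaussianPDF 0 (1/2) p.1 * gaussianPDF 0 (1/2) p.2 with hF
  set S : Set (ℝ × ℝ) := {p : ℝ × ℝ | b.re * p.1 - b.im * p.2 < c} with hSdef
  have hr : (0:ℝ) < ‖b‖ := norm_pos_iff.mpr hb
  set r : ℝ := ‖b‖ with hrdef
  set u : ℂ := b / (r:ℂ) with hudef
  have hu : ‖u‖ = 1 := by
    rw [hudef, norm_div, Complex.norm_real, Real.norm_of_nonneg hr.le]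
    field_simp
    exact hrdef.symm
  have hrne : (r:ℂ) ≠ 0 := by exact_mod_cast hr.ne'
  have hbu : b = (r:ℂ) * u := by
    rw [hudef, mul_comm, div_mul_cancel₀ _ hrne]
  have huc : Complex.normSq u = 1 := by rw [← Complex.sq_norm, hu]; norm_num
  set uc : Circle := ⟨u, by simp [Submonoid.unitSphere, hu]⟩ with hucdef
  have hucoe : (uc : ℂ) = u := rfl
  have hrotcoe : ⇑(rotation uc) = fun z : ℂ => u * z := by
    funext z; rw [rotation_apply, hucoe]
  have hrotmp : MeasurePreserving (fun z : ℂ => u * z) volume volume := by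
    have := (rotation uc).measurePreserving
    rwa [hrotcoe] at this
  have hrotemb : MeasurableEmbedding (fun z : ℂ => u * z) := by
    have := (rotation uc).toHomeomorph.measurableEmbedding
    rwa [show ⇑(rotation uc).toHomeomorph = ⇑(rotation uc) from rfl, hrotcoe] at this
  have hSmeas : MeasurableSet S :=
    measurableSet_lt ((measurable_fst.const_mul b.re).sub
      (measurable_snd.const_mul b.im)) measurable_const
  set e : ℂ ≃ᵐ ℝ × ℝ := Complex.measurableEquivRealProd with hedef
  have hecoe : ∀ z : ℂ, e z = (z.re, z.im) := fun z => rfl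
  set G : ℂ → ENNReal := fun z => F (e z) with hG
  set B : Set ℂ := {z : ℂ | z.re < c / r} with hB
  have hpre : e ⁻¹' S = (fun z : ℂ => u * z) ⁻¹' B := by
    ext z
    simp only [Set.mem_preimage, hecoe, hSdef, Set.mem_setOf_eq, hB]
    have h1 : b.re * z.re - b.im * z.im = (b * z).re := (Complex.mul_re b z).symm
    have h2 : (b * z).re = r * (u * z).re := by
      rw [hbu, mul_assoc, Complex.re_ofReal_mul]
    rw [h1, h2]
    rw [lt_div_iff₀' hr]
  have hpreB : B = e ⁻¹' (Iio (c / r) ×ˢ (Set.univ : Set ℝ)) := by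
    ext z
    simp [hecoe, hB]
  calc (ν.prod ν) S
      = ((volume.prod volume).withDensity F) S := by rw [prod_gauss_density]
    _ = ∫⁻ p in S, F p ∂(volume.prod volume) := withDensity_apply _ hSmeas
    _ = ∫⁻ z in e ⁻¹' S, F (e z) ∂volume :=
        (Complex.volume_preserving_equiv_real_prod.setLIntegral_comp_preimage_emb
          e.measurableEmbedding F S).symm
    _ = ∫⁻ z in (fun z : ℂ => u * z) ⁻¹' B, G (u * z) ∂volume := by
        rw [hpre]
        refine lintegral_congr fun z => ?_
        simp only [hG, hecoe, hF]
        exact (rot_invariant_density hu z).symm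
    _ = ∫⁻ z in B, G z ∂volume :=
        hrotmp.setLIntegral_comp_preimage_emb hrotemb G B
    _ = ∫⁻ z in e ⁻¹' (Iio (c / r) ×ˢ (Set.univ : Set ℝ)), F (e z) ∂volume := by
        rw [← hpreB]
    _ = ∫⁻ p in Iio (c / r) ×ˢ (Set.univ : Set ℝ), F p ∂(volume.prod volume) :=
        Complex.volume_preserving_equiv_real_prod.setLIntegral_comp_preimage_emb
          e.measurableEmbedding F _
    _ = ((volume.prod volume).withDensity F) (Iio (c / r) ×ˢ (Set.univ : Set ℝ)) :=
        (withDensity_apply _ (measurableSet_Iio.prod MeasurableSet.univ)).symm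
    _ = (ν.prod ν) (Iio (c / r) ×ˢ (Set.univ : Set ℝ)) := by rw [prod_gauss_density]
    _ = ν (Iio (c / r)) * ν Set.univ := Measure.prod_prod _ _
    _ = ν (Iio (c / r)) := by
        have : IsProbabilityMeasure ν := by rw [hν]; infer_instance
        rw [measure_univ, mul_one]

end Aux

/-- Equal-variance case of Lemma 1: with `|q_x| = |q_y|` and `a = μ̄_y q_y − μ̄_x q_x ≠ 0`,
`Pr(|X|² > |Y|²) = (1/2)[1 + erf((|μ_x|² − |μ_y|²)/(2|a|))]`, and in particular equals
`1/2` when `|μ_x| = |μ_y|`. -/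
theorem lemma1_equal_variance_case {Ω : Type*} [MeasureSpace Ω]
    (hprob : IsProbabilityMeasure (ℙ : Measure Ω))
    (n : Ω → ℂ) (hmeas : Measurable n)
    (hre : Measure.map (fun ω => (n ω).re) ℙ = gaussianReal 0 (1/2))
    (him : Measure.map (fun ω => (n ω).im) ℙ = gaussianReal 0 (1/2))
    (hindep : IndepFun (fun ω => (n ω).re) (fun ω => (n ω).im) ℙ)
    (μx μy qx qy a : ℂ) (hq : ‖qx‖ = ‖qy‖)
    (hadef : a = (starRingEnd ℂ) μy * qy - (starRingEnd ℂ) μx * qx) (ha : a ≠ 0)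
    (X Y : Ω → ℂ) (hX : ∀ ω, X ω = μx + qx * n ω) (hY : ∀ ω, Y ω = μy + qy * n ω) :
    (ℙ {ω | (‖Y ω‖) ^ 2 < (‖X ω‖) ^ 2}).toReal =
      (1 / 2) * (1 + erf (((‖μx‖) ^ 2 - (‖μy‖) ^ 2) /
        (2 * ‖a‖))) ∧
    (‖μx‖ = ‖μy‖ →
      (ℙ {ω | (‖Y ω‖) ^ 2 < (‖X ω‖) ^ 2}).toReal = 1 / 2) := by
  have hv : (1/2 : NNReal) ≠ 0 := by norm_num
  set c : ℝ := ((‖μx‖) ^ 2 - (‖μy‖) ^ 2) / 2 with hc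
  -- component facts
  have hq2 : qx.re^2 + qx.im^2 = qy.re^2 + qy.im^2 := by
    have h : Complex.normSq qx = Complex.normSq qy := by
      rw [← Complex.sq_norm, ← Complex.sq_norm, hq]
    simp only [Complex.normSq_apply] at h
    nlinarith [h]
  have haRe : a.re = μy.re*qy.re + μy.im*qy.im - (μx.re*qx.re + μx.im*qx.im) := by
    rw [hadef]
    simp [Complex.sub_re, Complex.mul_re]
    try ring
  have haIm : a.im = μy.re*qy.im - μy.im*qy.re - (μx.re*qx.im - μx.im*qx.re) := by
    rw [hadef]
    simp [Complex.sub_im, Complex.mul_im]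
    try ring
  -- event rewriting
  have hEvent : {ω | (‖Y ω‖) ^ 2 < (‖X ω‖) ^ 2}
      = (fun ω => ((n ω).re, (n ω).im)) ⁻¹'
          {p : ℝ × ℝ | a.re * p.1 - a.im * p.2 < c} := by
    ext ω
    simp only [Set.mem_setOf_eq, Set.mem_preimage, hX, hY, Complex.sq_norm]
    have key : Complex.normSq (μx + qx * n ω) - Complex.normSq (μy + qy * n ω)
        = (Complex.normSq μx - Complex.normSq μy)
          - 2*(a.re * (n ω).re - a.im * (n ω).im)
          + (qx.re^2 + qx.im^2 - (qy.re^2 + qy.im^2)) * ((n ω).re^2 + (n ω).im^2) := by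
      simp only [Complex.normSq_apply, Complex.add_re, Complex.add_im,
        Complex.mul_re, Complex.mul_im, haRe, haIm]
      ring
    have hcn : c = (Complex.normSq μx - Complex.normSq μy) / 2 := by
      rw [hc, Complex.sq_norm, Complex.sq_norm]
    constructor
    · intro h
      have := key
      rw [hq2] at this
      simp only [sub_self, zero_mul, add_zero] at this
      rw [hcn]
      linarith
    · intro h
      rw [hcn] at h
      have := key
      rw [hq2] at this
      simp only [sub_self, zero_mul, add_zero] at this
      linarith
  -- map to product Gaussian
  have h1 : Measurable fun ω => (n ω).re := Complex.measurable_re.comp hmeas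
  have h2 : Measurable fun ω => (n ω).im := Complex.measurable_im.comp hmeas
  have hpm : Measurable (fun ω => ((n ω).re, (n ω).im)) := h1.prodMk h2
  have hmap : Measure.map (fun ω => ((n ω).re, (n ω).im)) ℙ
      = (gaussianReal 0 (1/2)).prod (gaussianReal 0 (1/2)) := by
    exact ((indepFun_iff_map_prod_eq_prod_map_map h1.aemeasurable
      h2.aemeasurable).mp hindep).trans (by rw [hre, him])
  have hSmeas : MeasurableSet {p : ℝ × ℝ | a.re * p.1 - a.im * p.2 < c} :=
    measurableSet_lt ((measurable_fst.const_mul a.re).sub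
      (measurable_snd.const_mul a.im)) measurable_const
  have hPE : ℙ {ω | (‖Y ω‖) ^ 2 < (‖X ω‖) ^ 2}
      = gaussianReal 0 (1/2) (Set.Iio (c / ‖a‖)) := by
    rw [hEvent, ← Measure.map_apply hpm hSmeas, hmap, halfplane_measure a ha c]
  have htdiv : c / ‖a‖
      = ((‖μx‖) ^ 2 - (‖μy‖) ^ 2) / (2 * ‖a‖) := by
    rw [hc, div_div]
  have hPEtoReal : (ℙ {ω | (‖Y ω‖) ^ 2 < (‖X ω‖) ^ 2}).toReal
      = (1 / 2) * (1 + erf (((‖μx‖) ^ 2 - (‖μy‖) ^ 2) /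
        (2 * ‖a‖))) := by
    rw [hPE, gaussianReal_apply_eq_integral _ hv, ENNReal.toReal_ofReal
      (setIntegral_nonneg measurableSet_Iio (fun x _ => gaussianPDFReal_nonneg _ _ x)),
      gauss_cdf, htdiv]
  refine ⟨hPEtoReal, fun hμ => ?_⟩
  rw [hPEtoReal, hμ]
  simp [erf]
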